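/- Let (x_t), (w_t) be nonnegative sequences with x_{t+1}² ≤ β x_t² + γ w_t² + ε where 0 ≤ β < 1, γ, ε ≥ 0, and w_t ≤ r^t w₀ + c with 0 ≤ r < 1, c ≥ 0. Then for all t ≥ 1, x_t² ≤ β^t x₀² + 2γ w₀² · t · (max(β, r²))^{t−1} + (2γc² + ε)/(1 − β). -/
import Mathlib


/-- coupled recursion `x_{t+1}² ≤ β x_t² + γ w_t² + ε`,
`w_t ≤ r^t w₀ + c` gives
`x_t² ≤ β^t x₀² + 2γ w₀² t (max β r²)^{t-1} + (2γc² + ε)/(1-β)` for `t ≥ 1`. -/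
theorem stmt_16 (β γ ε r c : ℝ)
    (hβ0 : 0 ≤ β) (hβ1 : β < 1) (hγ : 0 ≤ γ) (hε : 0 ≤ ε)
    (hr0 : 0 ≤ r) (hr1 : r < 1) (hc : 0 ≤ c)
    (x w : ℕ → ℝ) (hx : ∀ t, 0 ≤ x t) (hw : ∀ t, 0 ≤ w t)
    (hrec : ∀ t, x (t + 1) ^ 2 ≤ β * x t ^ 2 + γ * w t ^ 2 + ε)
    (hwt : ∀ t, w t ≤ r ^ t * w 0 + c) :
    ∀ t, 1 ≤ t →
      x t ^ 2 ≤ β ^ t * x 0 ^ 2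
        + 2 * γ * w 0 ^ 2 * t * (max β (r ^ 2)) ^ (t - 1)
        + (2 * γ * c ^ 2 + ε) / (1 - β) := by
  have h1β : 0 < 1 - β := by linarith
  set M := max β (r ^ 2) with hM
  have hβM : β ≤ M := le_max_left _ _
  have hrM : r ^ 2 ≤ M := le_max_right _ _
  have hM0 : 0 ≤ M := le_trans hβ0 hβM
  set K := 2 * γ * c ^ 2 + ε with hK
  have hK0 : 0 ≤ K := by positivity
  have hKle : K ≤ K / (1 - β) := by
    rw [le_div_iff₀ h1β]; nlinarith
  have hwsq : ∀ t, γ * w t ^ 2 ≤ 2 * γ * w 0 ^ 2 * (r ^ 2) ^ t + 2 * γ * c ^ 2 := by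
    intro t
    have h := hwt t
    have h0 : 0 ≤ r ^ t * w 0 := mul_nonneg (pow_nonneg hr0 t) (hw 0)
    have hsq : w t ^ 2 ≤ (r ^ t * w 0 + c) ^ 2 := by nlinarith [hw t]
    have hpow : (r ^ 2) ^ t = (r ^ t) ^ 2 := by rw [← pow_mul, ← pow_mul, Nat.mul_comm]
    rw [hpow]
    nlinarith [sq_nonneg (r ^ t * w 0 - c), hw t]
  intro t ht
  induction t with
  | zero => omega
  | succ n ih =>
    rcases Nat.lt_or_ge n 1 with h1 | h1
    · -- n = 0
      have hn : n = 0 := by omega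
      subst hn
      have hr0' := hrec 0
      have hws := hwsq 0
      simp only [pow_zero, pow_one, one_mul, mul_one] at *
      norm_num
      nlinarith
    · have IH := ih h1
      have hMn : β * M ^ (n - 1) ≤ M ^ n := by
        have he : M ^ n = M * M ^ (n - 1) := by
          conv_lhs => rw [show n = (n - 1) + 1 by omega]
          rw [pow_succ]; ring
        rw [he]
        exact mul_le_mul_of_nonneg_right hβM (pow_nonneg hM0 _)
      have hrn : (r ^ 2) ^ n ≤ M ^ n := pow_le_pow_left₀ (sq_nonneg r) hrM n
      have hdiv : β * (K / (1 - β)) + K = K / (1 - β) := by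
        field_simp; ring
      have hrecn := hrec n
      have hws := hwsq n
      have h1' := mul_le_mul_of_nonneg_left IH hβ0
      have h2 : 2 * γ * w 0 ^ 2 * n * (β * M ^ (n - 1)) ≤ 2 * γ * w 0 ^ 2 * n * M ^ n :=
        mul_le_mul_of_nonneg_left hMn (by positivity)
      have h3 : 2 * γ * w 0 ^ 2 * (r ^ 2) ^ n ≤ 2 * γ * w 0 ^ 2 * M ^ n :=
        mul_le_mul_of_nonneg_left hrn (by positivity)
      have hsucc : n + 1 - 1 = n := by omega
      rw [hsucc]
      push_cast
      have hb : β ^ (n + 1) = β * β ^ n := by rw [pow_succ]; ring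
      rw [hb]
      linarith [h1', h2, h3, hdiv, hrecn, hws]
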